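/- Let q be a prime power, F a finite field with q² elements, and δ a generator of the cyclic group F^× of units of F. If i, j ∈ ZMod (q²-1) satisfy i ≢ j (mod q-1), then 1 + δ^{j-i} ≠ 0 in F. -/

import Mathlib

/-- The canonical reduction ring homomorphism `ZMod (q²-1) → ZMod (q-1)`,
which exists since `(q-1) ∣ (q²-1)`. -/
def red (q : ℕ) : ZMod (q ^ 2 - 1) →+* ZMod (q - 1) :=
  ZMod.castHom (by simpa using Nat.sub_dvd_pow_sub_pow q 1 2) (ZMod (q - 1))

theorem stmt1 (q : ℕ) (hq : IsPrimePow q) (F : Type*) [Field F] [Fintype F]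
    (hF : Fintype.card F = q ^ 2) (δ : Fˣ) (hδ : Subgroup.zpowers δ = ⊤)
    (i j : ZMod (q ^ 2 - 1)) (hij : red q i ≠ red q j) :
    (1 : F) + ((δ ^ (j - i).val : Fˣ) : F) ≠ 0 := by
  classical
  have hq2 : 2 ≤ q := hq.two_le
  have hq4 : 4 ≤ q ^ 2 := by nlinarith
  have hn : 0 < q ^ 2 - 1 := by omega
  haveI : NeZero (q ^ 2 - 1) := ⟨hn.ne'⟩
  set k := (j - i).val with hk
  have hklt : k < q ^ 2 - 1 := ZMod.val_lt _
  intro h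
  -- δ^k = -1 in F
  have hneg : ((δ : F)) ^ k = -1 := by
    have : ((δ ^ k : Fˣ) : F) = -1 := by linear_combination h
    push_cast at this
    exact this
  have hsq : δ ^ (2 * k) = 1 := by
    ext
    rw [mul_comm]
    push_cast [pow_mul, hneg]
    norm_num
  have hord : orderOf δ = q ^ 2 - 1 := by
    rw [orderOf_eq_card_of_forall_mem_zpowers (fun x => hδ ▸ Subgroup.mem_top x),
      Nat.card_eq_fintype_card, Fintype.card_units, hF]
  have hdvd : q ^ 2 - 1 ∣ 2 * k := by
    rw [← hord]; exact orderOf_dvd_of_pow_eq_one hsq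
  -- red (j - i) = 0
  have hred0 : red q (j - i) = 0 := by
    obtain ⟨c, hc⟩ := hdvd
    have hc2 : c < 2 := by
      by_contra hcge
      push_neg at hcge
      have : 2 * (q ^ 2 - 1) ≤ (q ^ 2 - 1) * c := by
        calc 2 * (q ^ 2 - 1) = (q ^ 2 - 1) * 2 := by ring
        _ ≤ (q ^ 2 - 1) * c := Nat.mul_le_mul_left _ hcge
      omega
    interval_cases c
    · -- 2*k = 0, so k = 0, so j = i, contradiction
      have hk0 : k = 0 := by omega
      have : j - i = 0 := by rwa [← ZMod.val_eq_zero]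
      rw [this, map_zero]
    · -- 2*k = q^2-1, q odd, q-1 ∣ k
      have hkeq : 2 * k = q ^ 2 - 1 := by omega
      have hqodd : Odd q := by
        rcases Nat.even_or_odd q with he | ho
        · exfalso
          obtain ⟨t, ht⟩ := (Nat.even_pow.mpr ⟨he, by norm_num⟩ : Even (q ^ 2))
          omega
        · exact ho
      obtain ⟨m, hm⟩ := hqodd
      have hsq' : q ^ 2 = 4 * (m * m) + 4 * m + 1 := by subst hm; ring
      have h1 : q - 1 = 2 * m := by omega
      have h2 : k = 2 * (m * m) + 2 * m := by omega
      have hkval : k = (q - 1) * (m + 1) := by rw [h1, h2]; ring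
      have : red q (j - i) = ((j - i).val : ZMod (q - 1)) := by
        rw [red, ZMod.castHom_apply, ZMod.natCast_val]
      rw [this, ← hk, hkval, Nat.cast_mul, ZMod.natCast_self, zero_mul]
  apply hij
  have hsub := map_sub (red q) j i
  rw [hred0] at hsub
  exact (sub_eq_zero.mp hsub.symm).symm
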